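/- Let F ∈ C¹(R^D, R^O) and suppose C(θ) → C̲ as θ → 0 with C̲ invertible, μ(θ) → μ̲. Assume that for every θ ≠ 0 the matrix equation −Γ(θ)⁻¹ Γ_pr Γ(θ)⁻¹ + Γ_pr⁻¹ + (1/θ) [J_F(θC_{:,1}+μ)ᵀ Γ_E⁻¹ (F(θC_{:,1}+μ) − F(μ)) ⋯ ] C(θ)⁻¹ = 0 holds, where Γ(θ) = C(θ)C(θ)ᵀ. Then the limit matrix Γ̲ = C̲C̲ᵀ satisfies Γ̲⁻¹ Γ_pr Γ̲⁻¹ = Γ_pr⁻¹ + J_F(μ̲)ᵀ Γ_E⁻¹ J_F(μ̲). -/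

import Mathlib

open Matrix Filter Topology

/-- Inverse of matrices is continuous along a filter at a point with nonzero determinant. -/
lemma tendsto_matrix_inv {α : Type*} {n : ℕ} {l : Filter α}
    {A : α → Matrix (Fin n) (Fin n) ℝ} {B : Matrix (Fin n) (Fin n) ℝ}
    (hB : B.det ≠ 0) (h : Tendsto A l (𝓝 B)) :
    Tendsto (fun x => (A x)⁻¹) l (𝓝 B⁻¹) := by
  have hc : ContinuousAt Inv.inv B := by
    apply continuousAt_matrix_inv
    rw [Ring.inverse_eq_inv']
    exact continuousAt_inv₀ hB
  exact hc.tendsto.comp h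

set_option maxHeartbeats 1600000 in
/-- Let `F ∈ C¹(ℝ^D, ℝ^O)` with Jacobian `J_F`, `C(θ) → C̲` invertible,
`μ(θ) → μ̲` as `θ → 0`. If for every `θ ≠ 0`
`−Γ(θ)⁻¹ Γ_pr Γ(θ)⁻¹ + Γ_pr⁻¹ + (1/θ)[J_F(θC_{:,k}+μ)ᵀ Γ_E⁻¹ (F(θC_{:,k}+μ) − F(μ))]ₖ C(θ)⁻¹ = 0`
with `Γ(θ) = C(θ)C(θ)ᵀ`, then `Γ̲ = C̲C̲ᵀ` satisfies
`Γ̲⁻¹ Γ_pr Γ̲⁻¹ = Γ_pr⁻¹ + J_F(μ̲)ᵀ Γ_E⁻¹ J_F(μ̲)`. -/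
theorem stmt9 {D O : ℕ}
    (Γpr : Matrix (Fin D) (Fin D) ℝ) (hΓpr : Γpr.PosDef)
    (ΓE : Matrix (Fin O) (Fin O) ℝ) (hΓE : ΓE.PosDef)
    (F : (Fin D → ℝ) → (Fin O → ℝ)) (hF : ContDiff ℝ 1 F)
    (JF : (Fin D → ℝ) → Matrix (Fin O) (Fin D) ℝ)
    (hJF : ∀ u, HasFDerivAt F (LinearMap.toContinuousLinearMap (JF u).mulVecLin) u)
    (μ : ℝ → Fin D → ℝ) (C : ℝ → Fin D → Fin D → ℝ)
    (μlim : Fin D → ℝ) (hμlim : Tendsto μ (𝓝[≠] (0 : ℝ)) (𝓝 μlim))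
    (Clim : Fin D → Fin D → ℝ) (hClim : Tendsto C (𝓝[≠] (0 : ℝ)) (𝓝 Clim))
    (hClimInv : IsUnit (Matrix.of Clim).det)
    (hstat : ∀ θ : ℝ, θ ≠ 0 →
      -((Matrix.of (C θ) * (Matrix.of (C θ))ᵀ)⁻¹ * Γpr *
          (Matrix.of (C θ) * (Matrix.of (C θ))ᵀ)⁻¹) + Γpr⁻¹ +
        (1 / θ) •
          ((Matrix.of fun i k =>
              ((JF (fun j => θ * C θ j k + μ θ j))ᵀ *ᵥ
                (ΓE⁻¹ *ᵥ (F (fun j => θ * C θ j k + μ θ j) - F (μ θ)))) i) *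
            (Matrix.of (C θ))⁻¹) = 0) :
    (Matrix.of Clim * (Matrix.of Clim)ᵀ)⁻¹ * Γpr * (Matrix.of Clim * (Matrix.of Clim)ᵀ)⁻¹ =
      Γpr⁻¹ + (JF μlim)ᵀ * ΓE⁻¹ * JF μlim := by
  set l : Filter ℝ := 𝓝[≠] (0 : ℝ) with hl
  -- notation
  set x : Fin D → ℝ → (Fin D → ℝ) := fun k θ => fun j => θ * C θ j k + μ θ j with hx_def
  set M : ℝ → Matrix (Fin D) (Fin D) ℝ := fun θ => Matrix.of fun i k =>
      ((JF (x k θ))ᵀ *ᵥ (ΓE⁻¹ *ᵥ (F (x k θ) - F (μ θ)))) i with hM_def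
  have hθ0 : Tendsto (fun θ : ℝ => θ) l (𝓝 0) := tendsto_id.mono_left nhdsWithin_le_nhds
  -- x k θ → μlim
  have hx : ∀ k, Tendsto (x k) l (𝓝 μlim) := by
    intro k
    rw [tendsto_pi_nhds]
    intro j
    have hC : Tendsto (fun θ => C θ j k) l (𝓝 (Clim j k)) :=
      ((continuous_apply k).tendsto _).comp (((continuous_apply j).tendsto _).comp hClim)
    have hμ : Tendsto (fun θ => μ θ j) l (𝓝 (μlim j)) :=
      ((continuous_apply j).tendsto _).comp hμlim
    have := (hθ0.mul hC).add hμ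
    simpa using this
  -- continuity of JF
  have hLeq : ∀ u, LinearMap.toContinuousLinearMap (JF u).mulVecLin = fderiv ℝ F u :=
    fun u => ((hJF u).fderiv).symm
  have hfderivc : Continuous fun u => fderiv ℝ F u := hF.continuous_fderiv one_ne_zero
  have hJFc : Continuous JF := by
    have hentry : ∀ (u : Fin D → ℝ) (o : Fin O) (j : Fin D),
        JF u o j = fderiv ℝ F u (Pi.single j 1) o := by
      intro u o j
      rw [← hLeq u]
      simp [Matrix.mulVecLin_apply]
    apply continuous_pi; intro o; apply continuous_pi; intro j
    simp only [hentry]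
    exact (continuous_apply o).comp (hfderivc.clm_apply continuous_const)
  have hJFx : ∀ k, Tendsto (fun θ => JF (x k θ)) l (𝓝 (JF μlim)) :=
    fun k => (hJFc.tendsto _).comp (hx k)
  -- strict differentiability at μlim
  have hstrict : HasStrictFDerivAt F
      (LinearMap.toContinuousLinearMap (JF μlim).mulVecLin) μlim := by
    have h := (hF.contDiffAt (x := μlim)).hasStrictFDerivAt one_ne_zero
    rwa [← hLeq μlim] at h
  set L : (Fin D → ℝ) →L[ℝ] (Fin O → ℝ) :=
    LinearMap.toContinuousLinearMap (JF μlim).mulVecLin with hL_def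
  -- difference quotient limit
  have hw : ∀ k, Tendsto (fun θ => (1 / θ) • (F (x k θ) - F (μ θ))) l
      (𝓝 (JF μlim *ᵥ fun j => Clim j k)) := by
    intro k
    set v : ℝ → (Fin D → ℝ) := fun θ j => C θ j k with hv_def
    have hv : Tendsto v l (𝓝 fun j => Clim j k) := by
      rw [tendsto_pi_nhds]
      intro j
      exact ((continuous_apply k).tendsto _).comp (((continuous_apply j).tendsto _).comp hClim)
    have hxsub : ∀ θ, x k θ - μ θ = θ • v θ := by
      intro θ; funext j; simp [hx_def, hv_def, mul_comm]
    have hcomp : Tendsto (fun θ => (x k θ, μ θ)) l (𝓝 (μlim, μlim)) :=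
      (hx k).prodMk_nhds hμlim
    have ho : (fun θ => F (x k θ) - F (μ θ) - L (x k θ - μ θ)) =o[l]
        (fun θ => x k θ - μ θ) := (hstrict.isLittleO).comp_tendsto hcomp
    have hO : (fun θ => x k θ - μ θ) =O[l] (fun θ => θ) := by
      have hvO : v =O[l] (fun _ => (1 : ℝ)) := hv.isBigO_one ℝ
      have := (Asymptotics.isBigO_refl (fun θ : ℝ => θ) l).smul hvO
      simp only [smul_eq_mul, mul_one] at this
      calc (fun θ => x k θ - μ θ) = fun θ => θ • v θ := funext hxsub
        _ =O[l] fun θ => θ := this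
    have ho2 : (fun θ => F (x k θ) - F (μ θ) - L (x k θ - μ θ)) =o[l] (fun θ => θ) :=
      ho.trans_isBigO hO
    have h0 : Tendsto (fun θ => θ⁻¹ • (F (x k θ) - F (μ θ) - L (x k θ - μ θ))) l (𝓝 0) :=
      ho2.tendsto_inv_smul_nhds_zero
    have hLv : Tendsto (fun θ => L (v θ)) l (𝓝 (L fun j => Clim j k)) :=
      (L.continuous.tendsto _).comp hv
    have hsum := h0.add hLv
    rw [zero_add] at hsum
    have heq : ∀ᶠ θ in l, θ⁻¹ • (F (x k θ) - F (μ θ) - L (x k θ - μ θ)) + L (v θ)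
        = (1 / θ) • (F (x k θ) - F (μ θ)) := by
      filter_upwards [self_mem_nhdsWithin] with θ hθ
      have hθ' : (θ : ℝ) ≠ 0 := hθ
      rw [one_div, hxsub, L.map_smul, smul_sub, smul_smul, inv_mul_cancel₀ hθ', one_smul]
      abel
    have : Tendsto (fun θ => (1 / θ) • (F (x k θ) - F (μ θ))) l (𝓝 (L fun j => Clim j k)) :=
      hsum.congr' heq
    simpa [hL_def, Matrix.mulVecLin_apply] using this
  -- matrix limit of (1/θ) • M θ
  have T1 : Tendsto (fun θ => (1 / θ) • M θ) l
      (𝓝 ((JF μlim)ᵀ * ΓE⁻¹ * JF μlim * Matrix.of Clim)) := by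
    apply tendsto_pi_nhds.2
    intro i
    rw [tendsto_pi_nhds]
    intro k
    have hentry : ∀ θ, ((1 / θ) • M θ) i k =
        ((JF (x k θ))ᵀ *ᵥ (ΓE⁻¹ *ᵥ ((1 / θ) • (F (x k θ) - F (μ θ))))) i := by
      intro θ
      simp [hM_def, Matrix.mulVec_smul, Matrix.smul_apply, smul_eq_mul]
    have htarget : ((JF μlim)ᵀ * ΓE⁻¹ * JF μlim * Matrix.of Clim) i k =
        ((JF μlim)ᵀ *ᵥ (ΓE⁻¹ *ᵥ (JF μlim *ᵥ fun j => Clim j k))) i := by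
      rw [Matrix.mulVec_mulVec, Matrix.mulVec_mulVec]
      simp [Matrix.mul_apply, Matrix.mulVec, dotProduct]
    simp only [hentry, htarget]
    -- continuity of (A, w) ↦ (Aᵀ *ᵥ (ΓE⁻¹ *ᵥ w)) i
    simp only [Matrix.mulVec, dotProduct, Matrix.transpose_apply]
    apply tendsto_finset_sum
    intro o _
    apply Tendsto.mul
    · exact ((continuous_apply i).tendsto _).comp
        (((continuous_apply o).tendsto _).comp (hJFx k))
    · apply tendsto_finset_sum
      intro o' _
      exact tendsto_const_nhds.mul
        (((continuous_apply o').tendsto _).comp (hw k))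
  -- limits of inverses
  have hCtend : Tendsto (fun θ => Matrix.of (C θ)) l (𝓝 (Matrix.of Clim)) := hClim
  have hdetC : (Matrix.of Clim).det ≠ 0 := by
    simpa [isUnit_iff_ne_zero] using hClimInv
  have hCinv : Tendsto (fun θ => (Matrix.of (C θ))⁻¹) l (𝓝 (Matrix.of Clim)⁻¹) :=
    tendsto_matrix_inv hdetC hCtend
  have hΓtend : Tendsto (fun θ => Matrix.of (C θ) * (Matrix.of (C θ))ᵀ) l
      (𝓝 (Matrix.of Clim * (Matrix.of Clim)ᵀ)) := by
    have : Continuous fun A : Matrix (Fin D) (Fin D) ℝ => A * Aᵀ :=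
      continuous_id.matrix_mul continuous_id.matrix_transpose
    exact (this.tendsto _).comp hCtend
  have hdetΓ : (Matrix.of Clim * (Matrix.of Clim)ᵀ).det ≠ 0 := by
    rw [Matrix.det_mul, Matrix.det_transpose]
    exact mul_ne_zero hdetC hdetC
  have hΓinv : Tendsto (fun θ => (Matrix.of (C θ) * (Matrix.of (C θ))ᵀ)⁻¹) l
      (𝓝 (Matrix.of Clim * (Matrix.of Clim)ᵀ)⁻¹) := tendsto_matrix_inv hdetΓ hΓtend
  have hmulcont : Continuous fun p : Matrix (Fin D) (Fin D) ℝ × Matrix (Fin D) (Fin D) ℝ =>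
      p.1 * p.2 := continuous_fst.matrix_mul continuous_snd
  have hmul : ∀ {A B : ℝ → Matrix (Fin D) (Fin D) ℝ} {A₀ B₀ : Matrix (Fin D) (Fin D) ℝ},
      Tendsto A l (𝓝 A₀) → Tendsto B l (𝓝 B₀) → Tendsto (fun θ => A θ * B θ) l (𝓝 (A₀ * B₀)) := by
    intro A B A₀ B₀ hA hB
    exact (hmulcont.tendsto (A₀, B₀)).comp (hA.prodMk_nhds hB)
  -- limit of the product (1/θ) • (M θ * C θ⁻¹), two ways
  have T1' : Tendsto (fun θ => (1 / θ) • (M θ * (Matrix.of (C θ))⁻¹)) l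
      (𝓝 ((JF μlim)ᵀ * ΓE⁻¹ * JF μlim)) := by
    have h := hmul T1 hCinv
    have heq : ∀ θ, ((1 / θ) • M θ) * (Matrix.of (C θ))⁻¹
        = (1 / θ) • (M θ * (Matrix.of (C θ))⁻¹) := fun θ => smul_mul_assoc _ _ _
    simp only [heq] at h
    have : (JF μlim)ᵀ * ΓE⁻¹ * JF μlim * Matrix.of Clim * (Matrix.of Clim)⁻¹
        = (JF μlim)ᵀ * ΓE⁻¹ * JF μlim := by
      rw [mul_assoc, Matrix.mul_nonsing_inv _ hClimInv, mul_one]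
    rwa [this] at h
  have T2 : Tendsto (fun θ => (1 / θ) • (M θ * (Matrix.of (C θ))⁻¹)) l
      (𝓝 ((Matrix.of Clim * (Matrix.of Clim)ᵀ)⁻¹ * Γpr * (Matrix.of Clim * (Matrix.of Clim)ᵀ)⁻¹
        - Γpr⁻¹)) := by
    have hXlim := (hmul (hmul hΓinv (tendsto_const_nhds (x := Γpr))) hΓinv).sub
      (tendsto_const_nhds (x := Γpr⁻¹))
    apply hXlim.congr'
    filter_upwards [self_mem_nhdsWithin] with θ hθ
    have h := hstat θ hθ
    set X := (Matrix.of (C θ) * (Matrix.of (C θ))ᵀ)⁻¹ * Γpr * (Matrix.of (C θ) * (Matrix.of (C θ))ᵀ)⁻¹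
    set T := (1 / θ) • (M θ * (Matrix.of (C θ))⁻¹)
    have h' : -X + Γpr⁻¹ + T = 0 := h
    have h2 : T = -(-X + Γpr⁻¹) := eq_neg_of_add_eq_zero_right h'
    rw [h2]; abel
  have huniq := tendsto_nhds_unique T2 T1'
  -- conclude
  have : (Matrix.of Clim * (Matrix.of Clim)ᵀ)⁻¹ * Γpr * (Matrix.of Clim * (Matrix.of Clim)ᵀ)⁻¹
      = Γpr⁻¹ + ((Matrix.of Clim * (Matrix.of Clim)ᵀ)⁻¹ * Γpr *
        (Matrix.of Clim * (Matrix.of Clim)ᵀ)⁻¹ - Γpr⁻¹) := by abel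
  rw [this, huniq]
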